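/- Let C ⊆ ℝⁿ be a nonempty closed convex set and f : ℝⁿ → ℝ be continuously differentiable with ∇f L-Lipschitz on C for some L > 0. Let x ∈ C, let p ∈ C satisfy ⟨∇f(x), p − x⟩ ≤ ⟨∇f(x), q − x⟩ for all q ∈ C, set v := ⟨∇f(x), p − x⟩ and suppose v < 0. Define λ := min{1, |v|/(L‖p − x‖²)} and x⁺ := x + λ(p − x). Then f(x⁺) ≤ f(x) − (1/2)|v|·λ; in particular f(x⁺) < f(x). -/

import Mathlib

open scoped RealInnerProductSpace

lemma descent_aux {n : ℕ} (f : EuclideanSpace ℝ (Fin n) → ℝ) (hf : ContDiff ℝ 1 f)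
    (x d : EuclideanSpace ℝ (Fin n)) (L : ℝ) (hL : 0 ≤ L)
    (hLip : ∀ t ∈ Set.Icc (0:ℝ) 1, ‖gradient f (x + t • d) - gradient f x‖ ≤ L * (t * ‖d‖)) :
    f (x + d) ≤ f x + ⟪gradient f x, d⟫ + L / 2 * ‖d‖ ^ 2 := by
  have hdiff := hf.differentiable one_ne_zero
  have hγ : ∀ t : ℝ, HasDerivAt (fun t : ℝ => x + t • d) d t := by
    intro t
    simpa using ((hasDerivAt_id t).smul_const d).const_add x
  have hg : ∀ t : ℝ, HasDerivAt (fun t : ℝ => f (x + t • d))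
      ⟪gradient f (x + t • d), d⟫ t := by
    intro t
    have h1 := (hdiff (x + t • d)).hasGradientAt.hasFDerivAt
    exact h1.comp_hasDerivAt t (hγ t)
  have hgradcont : Continuous (gradient f) := by
    have := hf.continuous_fderiv one_ne_zero
    exact (InnerProductSpace.toDual ℝ (EuclideanSpace ℝ (Fin n))).symm.continuous.comp this
  have hcont : Continuous fun t : ℝ => ⟪gradient f (x + t • d), d⟫ := by
    exact (hgradcont.comp (by continuity)).inner continuous_const
  have hFTC : ∫ t in (0:ℝ)..1, ⟪gradient f (x + t • d), d⟫ = f (x + d) - f x := by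
    have := intervalIntegral.integral_eq_sub_of_hasDerivAt
      (fun t _ => hg t) (hcont.intervalIntegrable 0 1)
    simpa using this
  have hbound : ∫ t in (0:ℝ)..1, ⟪gradient f (x + t • d), d⟫ ≤
      ∫ t in (0:ℝ)..1, (⟪gradient f x, d⟫ + (L * ‖d‖ ^ 2) * t) := by
    apply intervalIntegral.integral_mono_on (by norm_num)
      (hcont.intervalIntegrable 0 1)
      ((by continuity : Continuous fun t : ℝ => ⟪gradient f x, d⟫ + (L * ‖d‖ ^ 2) * t).intervalIntegrable 0 1)
    intro t ht
    have h1 : ⟪gradient f (x + t • d) - gradient f x, d⟫ ≤ L * (t * ‖d‖) * ‖d‖ := by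
      calc ⟪gradient f (x + t • d) - gradient f x, d⟫
          ≤ ‖gradient f (x + t • d) - gradient f x‖ * ‖d‖ := real_inner_le_norm _ _
        _ ≤ L * (t * ‖d‖) * ‖d‖ := by
            exact mul_le_mul_of_nonneg_right (hLip t ht) (norm_nonneg _)
    have h2 : ⟪gradient f (x + t • d), d⟫ =
        ⟪gradient f x, d⟫ + ⟪gradient f (x + t • d) - gradient f x, d⟫ := by
      rw [inner_sub_left]; ring
    rw [h2]
    nlinarith [h1]
  have hint : ∫ t in (0:ℝ)..1, (⟪gradient f x, d⟫ + (L * ‖d‖ ^ 2) * t) =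
      ⟪gradient f x, d⟫ + L / 2 * ‖d‖ ^ 2 := by
    have : (fun t : ℝ => ⟪gradient f x, d⟫ + (L * ‖d‖ ^ 2) * t) =
        fun t : ℝ => ⟪gradient f x, d⟫ + (L * ‖d‖ ^ 2) * id t := rfl
    rw [this, intervalIntegral.integral_add (g := fun t : ℝ => L * ‖d‖ ^ 2 * id t) (intervalIntegrable_const)
      (((continuous_const.mul continuous_id).intervalIntegrable 0 1 :
        IntervalIntegrable (fun t : ℝ => L * ‖d‖ ^ 2 * id t) _ 0 1)),
      intervalIntegral.integral_const_mul]
    simp only [Function.id_def, integral_id, intervalIntegral.integral_const]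
    norm_num
    ring
  nlinarith [hFTC, hbound, hint]

/-- Sufficient decrease of a Frank–Wolfe step: if `∇f` is `L`-Lipschitz on the nonempty
closed convex set `C`, `x ∈ C`, `p ∈ C` minimizes `q ↦ ⟪∇f x, q - x⟫` over `C`,
`v = ⟪∇f x, p - x⟫ < 0`, `λ = min 1 (|v| / (L‖p - x‖²))` and `x⁺ = x + λ(p - x)`, then
`f x⁺ ≤ f x - |v|λ/2 < f x`. -/
theorem frank_wolfe_sufficient_decrease (n : ℕ) (C : Set (EuclideanSpace ℝ (Fin n)))
    (hCne : C.Nonempty) (hCcl : IsClosed C) (hCconv : Convex ℝ C)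
    (f : EuclideanSpace ℝ (Fin n) → ℝ) (hf : ContDiff ℝ 1 f)
    (L : ℝ) (hL : 0 < L)
    (hLip : ∀ a ∈ C, ∀ b ∈ C, ‖gradient f a - gradient f b‖ ≤ L * ‖a - b‖)
    (x : EuclideanSpace ℝ (Fin n)) (hx : x ∈ C)
    (p : EuclideanSpace ℝ (Fin n)) (hp : p ∈ C)
    (hmin : ∀ q ∈ C, ⟪gradient f x, p - x⟫ ≤ ⟪gradient f x, q - x⟫)
    (v : ℝ) (hv : v = ⟪gradient f x, p - x⟫) (hvneg : v < 0)
    (lam : ℝ) (hlam : lam = min 1 (|v| / (L * ‖p - x‖ ^ 2)))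
    (x' : EuclideanSpace ℝ (Fin n)) (hx' : x' = x + lam • (p - x)) :
    f x' ≤ f x - 1 / 2 * |v| * lam ∧ f x' < f x := by
  have hd0 : p - x ≠ 0 := by
    intro h
    rw [hv, h, inner_zero_right] at hvneg
    exact lt_irrefl 0 hvneg
  have hdn : 0 < ‖p - x‖ := norm_pos_iff.mpr hd0
  have hA : 0 < L * ‖p - x‖ ^ 2 := by positivity
  have habs : |v| = -v := abs_of_neg hvneg
  have hvabs : 0 < |v| := abs_pos.mpr (ne_of_lt hvneg)
  have hlam_pos : 0 < lam := by
    rw [hlam]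
    exact lt_min one_pos (div_pos hvabs hA)
  have hlam_le1 : lam ≤ 1 := hlam ▸ min_le_left _ _
  -- segment membership
  have hseg : ∀ s : ℝ, s ∈ Set.Icc (0:ℝ) 1 → x + s • (p - x) ∈ C := by
    intro s hs
    have : x + s • (p - x) = (1 - s) • x + s • p := by
      rw [smul_sub]; module
    rw [this]
    exact hCconv hx hp (by linarith [hs.1, hs.2]) hs.1 (by ring)
  -- apply the descent lemma with d = lam • (p - x)
  have key := descent_aux f hf x (lam • (p - x)) L hL.le ?_
  · have hinn : ⟪gradient f x, lam • (p - x)⟫ = lam * v := by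
      rw [hv, real_inner_smul_right]
    have hnrm : ‖lam • (p - x)‖ ^ 2 = lam ^ 2 * ‖p - x‖ ^ 2 := by
      rw [norm_smul, mul_pow, Real.norm_eq_abs, sq_abs]
    rw [hinn, hnrm] at key
    rw [← hx'] at key
    -- algebra: lam * v + L/2 * (lam^2 * ‖p-x‖^2) ≤ - 1/2 * |v| * lam
    have halg : lam * v + L / 2 * (lam ^ 2 * ‖p - x‖ ^ 2) ≤ -(1 / 2 * |v| * lam) := by
      rcases min_cases (1:ℝ) (|v| / (L * ‖p - x‖ ^ 2)) with ⟨h1, h2⟩ | ⟨h1, h2⟩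
      · -- lam = 1, L‖d‖² ≤ |v|
        have hlam1 : lam = 1 := by rw [hlam, h1]
        have hAv : L * ‖p - x‖ ^ 2 ≤ |v| := by
          rw [le_div_iff₀ hA, one_mul] at h2
          exact h2
        rw [hlam1]
        nlinarith [habs]
      · -- lam = |v| / A
        have hlamA : lam * (L * ‖p - x‖ ^ 2) = |v| := by
          rw [hlam, h1, div_mul_cancel₀ _ (ne_of_gt hA)]
        nlinarith [hlamA, habs, hlam_pos]
    constructor
    · linarith [key]
    · nlinarith [key, hvabs, hlam_pos]
  · -- Lipschitz along the segment
    intro t ht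
    have hmem : x + t • (lam • (p - x)) ∈ C := by
      have : x + t • (lam • (p - x)) = x + (t * lam) • (p - x) := by rw [smul_smul]
      rw [this]
      exact hseg (t * lam) ⟨mul_nonneg ht.1 hlam_pos.le,
        le_trans (mul_le_mul ht.2 hlam_le1 hlam_pos.le zero_le_one) (by norm_num)⟩
    have := hLip _ hmem _ hx
    calc ‖gradient f (x + t • (lam • (p - x))) - gradient f x‖
        ≤ L * ‖x + t • (lam • (p - x)) - x‖ := this
      _ = L * (t * ‖lam • (p - x)‖) := by
          rw [add_sub_cancel_left, norm_smul, Real.norm_eq_abs, abs_of_nonneg ht.1]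
      _ ≤ L * (t * ‖lam • (p - x)‖) := le_rfl
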